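/- Let d ≥ 1, α ∈ [0,1), r > 0 and γ ∈ ℝ. Then the weight w^{(γ)} = ((1+|k|)^γ)_{k∈ℤ^d∖{0}} is moderate with respect to the covering (B_k^r)_{k∈ℤ^d∖{0}}: there is a constant C ≥ 1 such that for all k, l ∈ ℤ^d∖{0} with B_k^r ∩ B_l^r ≠ ∅, one has (1+|k|)^γ ≤ C·(1+|l|)^γ. -/

import Mathlib

open MeasureTheory
open scoped ENNReal

/-- The integer lattice point `k ∈ ℤ^d` viewed as an element of `ℝ^d`. -/
noncomputable def intVec {d : ℕ} (k : Fin d → ℤ) : EuclideanSpace ℝ (Fin d) :=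
  (EuclideanSpace.equiv (Fin d) ℝ).symm (fun i => (k i : ℝ))

/-- The ball `B_k^r = {ξ ∈ ℝ^d : |ξ - |k|^{α₀} k| < r |k|^{α₀}}` with `α₀ = α/(1-α)`, a member of
the standard `α`-covering of the frequency space `ℝ^d`. -/
noncomputable def alphaBall (d : ℕ) (α r : ℝ) (k : Fin d → ℤ) :
    Set (EuclideanSpace ℝ (Fin d)) :=
  Metric.ball ((‖intVec k‖ ^ (α / (1 - α))) • intVec k) (r * ‖intVec k‖ ^ (α / (1 - α)))

lemma one_le_norm_intVec {d : ℕ} (k : Fin d → ℤ) (hk : k ≠ 0) : 1 ≤ ‖intVec k‖ := by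
  obtain ⟨i, hi⟩ : ∃ i, k i ≠ 0 := by
    by_contra h
    push_neg at h
    exact hk (funext h)
  have h1 : (1 : ℝ) ≤ ‖(k i : ℝ)‖ := by
    rw [Real.norm_eq_abs, ← Int.cast_abs]
    exact_mod_cast Int.one_le_abs hi
  have hcoord : (intVec k) i = (k i : ℝ) := rfl
  have hi2 : (1:ℝ) ≤ ‖(intVec k) i‖ ^ 2 := by
    rw [hcoord]; nlinarith [norm_nonneg ((k i : ℝ))]
  have hsum : (1:ℝ) ≤ ∑ j, ‖(intVec k) j‖ ^ 2 := by
    have hle : ‖(intVec k) i‖ ^ 2 ≤ ∑ j, ‖(intVec k) j‖ ^ 2 :=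
      Finset.single_le_sum (f := fun j => ‖(intVec k) j‖ ^ 2)
        (fun j _ => by positivity) (Finset.mem_univ i)
    linarith
  rw [EuclideanSpace.norm_eq]
  calc (1:ℝ) = Real.sqrt 1 := by simp
    _ ≤ Real.sqrt (∑ j, ‖(intVec k) j‖ ^ 2) := Real.sqrt_le_sqrt hsum

/-- Key real arithmetic lemma. -/
lemma growth_lemma {r t A B : ℝ} (hr : 0 < r) (ht : 0 ≤ t) (hA : 1 ≤ A) (hB : 1 ≤ B)
    (h : A ^ t * A - B ^ t * B ≤ r * (A ^ t + B ^ t)) : A ≤ (1 + 2 * r) * B := by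
  rcases le_or_gt A B with hAB | hAB
  · nlinarith
  · have hBA : B ^ t ≤ A ^ t := Real.rpow_le_rpow (by linarith) hAB.le ht
    have hApos : (0:ℝ) < A ^ t := Real.rpow_pos_of_pos (by linarith) t
    have h1 : A ^ t * (A - B) ≤ A ^ t * A - B ^ t * B := by nlinarith
    have h2 : r * (A ^ t + B ^ t) ≤ 2 * r * A ^ t := by nlinarith
    have h3 : A ^ t * (A - B) ≤ 2 * r * A ^ t := by linarith
    have h4 : A - B ≤ 2 * r := by
      by_contra hc
      push_neg at hc
      nlinarith
    nlinarith

/-- For `d ≥ 1`, `α ∈ [0,1)`, `r > 0` and `γ ∈ ℝ`, the weight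
`w^{(γ)}_k = (1 + |k|)^γ` is moderate with respect to the covering `(B_k^r)_{k ∈ ℤ^d∖{0}}`:
there is `C ≥ 1` with `(1+|k|)^γ ≤ C (1+|l|)^γ` whenever `B_k^r ∩ B_l^r ≠ ∅`. -/
theorem alpha_covering_weight_moderate
    {d : ℕ} (hd : 1 ≤ d) (α : ℝ) (hα0 : 0 ≤ α) (hα1 : α < 1) (r : ℝ) (hr : 0 < r) (γ : ℝ) :
    ∃ C : ℝ, 1 ≤ C ∧ ∀ k l : Fin d → ℤ, k ≠ 0 → l ≠ 0 →
      (alphaBall d α r k ∩ alphaBall d α r l).Nonempty →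
      (1 + ‖intVec k‖) ^ γ ≤ C * (1 + ‖intVec l‖) ^ γ := by
  set t := α / (1 - α) with htdef
  have ht : 0 ≤ t := div_nonneg hα0 (by linarith)
  set M : ℝ := 1 + 2 * r with hM
  have hM1 : 1 ≤ M := by simp [hM]; linarith
  refine ⟨M ^ |γ|, Real.one_le_rpow hM1 (abs_nonneg γ), ?_⟩
  intro k l hk hl hkl
  set A := ‖intVec k‖ with hA
  set B := ‖intVec l‖ with hB
  have hA1 : 1 ≤ A := one_le_norm_intVec k hk
  have hB1 : 1 ≤ B := one_le_norm_intVec l hl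
  -- distance between centers
  obtain ⟨ξ, hξk, hξl⟩ := hkl
  have hdist : dist ((A ^ t) • intVec k) ((B ^ t) • intVec l) ≤ r * A ^ t + r * B ^ t := by
    calc dist ((A ^ t) • intVec k) ((B ^ t) • intVec l)
        ≤ dist ((A ^ t) • intVec k) ξ + dist ξ ((B ^ t) • intVec l) := dist_triangle _ _ _
      _ ≤ r * A ^ t + r * B ^ t := by
          have h1 := Metric.mem_ball.mp hξk
          have h2 := Metric.mem_ball.mp hξl
          rw [dist_comm] at h1
          exact add_le_add h1.le h2.le
  have hAt : (0:ℝ) ≤ A ^ t := (Real.rpow_pos_of_pos (by linarith) t).le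
  have hBt : (0:ℝ) ≤ B ^ t := (Real.rpow_pos_of_pos (by linarith) t).le
  have hnorm : |A ^ t * A - B ^ t * B| ≤ r * (A ^ t + B ^ t) := by
    have e1 : ‖(A ^ t) • intVec k‖ = A ^ t * A := by
      rw [norm_smul, Real.norm_of_nonneg hAt]
    have e2 : ‖(B ^ t) • intVec l‖ = B ^ t * B := by
      rw [norm_smul, Real.norm_of_nonneg hBt]
    have := abs_norm_sub_norm_le ((A ^ t) • intVec k) ((B ^ t) • intVec l)
    rw [e1, e2, ← dist_eq_norm] at this
    linarith [this.trans hdist, hdist]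
  have habs1 : A ^ t * A - B ^ t * B ≤ r * (A ^ t + B ^ t) := (abs_le.mp hnorm).2
  have habs2 : B ^ t * B - A ^ t * A ≤ r * (B ^ t + A ^ t) := by
    have := (abs_le.mp hnorm).1; linarith
  have hAB : A ≤ M * B := growth_lemma hr ht hA1 hB1 habs1
  have hBA : B ≤ M * A := growth_lemma hr ht hB1 hA1 habs2
  have hMpos : (0:ℝ) < M := by linarith
  have h1A : (0:ℝ) < 1 + A := by linarith
  have h1B : (0:ℝ) < 1 + B := by linarith
  have key1 : 1 + A ≤ M * (1 + B) := by nlinarith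
  have key2 : 1 + B ≤ M * (1 + A) := by nlinarith
  rcases le_or_gt 0 γ with hγ | hγ
  · rw [abs_of_nonneg hγ]
    calc (1 + A) ^ γ ≤ (M * (1 + B)) ^ γ := Real.rpow_le_rpow h1A.le key1 hγ
      _ = M ^ γ * (1 + B) ^ γ := Real.mul_rpow hMpos.le h1B.le
  · rw [abs_of_neg hγ]
    have : (M * (1 + A)) ^ γ ≤ (1 + B) ^ γ :=
      Real.rpow_le_rpow_of_nonpos h1B key2 hγ.le
    rw [Real.mul_rpow hMpos.le h1A.le] at this
    have hMγ : (0:ℝ) < M ^ γ := Real.rpow_pos_of_pos hMpos γ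
    have h2 : (1 + A) ^ γ ≤ M ^ (-γ) * (1 + B) ^ γ := by
      rw [Real.rpow_neg hMpos.le]
      rw [← mul_le_mul_iff_right₀ hMγ]
      calc M ^ γ * (1 + A) ^ γ ≤ (1 + B) ^ γ := this
        _ = M ^ γ * ((M ^ γ)⁻¹ * (1 + B) ^ γ) := by
            field_simp
    exact h2
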